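/- For a finite simple graph G with no triangles (equipped with the flag complex, so its faces are vertices and edges), Σ_{x ∈ V(G_1)} χ(S(x)) = 4 v_1(G), where v_1(G) is the number of edges of G and G_1 is the Barycentric refinement. -/

import Mathlib

open scoped Classical

/-- Euler characteristic of the flag (Whitney) complex of a finite simple graph:
the alternating sum over all nonempty cliques. -/
noncomputable def eulerChar {V : Type*} [Fintype V] (G : SimpleGraph V) : ℤ :=
  ∑ s : Finset V, if s.Nonempty ∧ G.IsClique (s : Set V) then (-1 : ℤ) ^ (s.card - 1) else 0

/-- The Euler characteristic of an edgeless graph is the number of vertices. -/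
lemma eulerChar_edgeless {W : Type*} [Fintype W] (H : SimpleGraph W)
    (h : ∀ a b : W, ¬ H.Adj a b) : eulerChar H = (Fintype.card W : ℤ) := by
  have hP : ∀ s : Finset W, (s.Nonempty ∧ H.IsClique (s : Set W)) ↔ s.card = 1 := by
    intro s
    constructor
    · rintro ⟨hne, hcl⟩
      by_contra hc
      have h2 : 2 ≤ s.card := by
        have := hne.card_pos; omega
      obtain ⟨a, ha, b, hb, hab⟩ := Finset.one_lt_card.mp h2
      exact h a b (hcl (by simpa using ha) (by simpa using hb) hab)
    · intro hc
      obtain ⟨a, rfl⟩ := Finset.card_eq_one.mp hc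
      exact ⟨Finset.singleton_nonempty a, by simp⟩
  unfold eulerChar
  have hstep : ∀ s : Finset W,
      (if s.Nonempty ∧ H.IsClique (s : Set W) then ((-1 : ℤ)) ^ (s.card - 1) else 0)
        = if s.card = 1 then 1 else 0 := by
    intro s
    by_cases hs : s.card = 1
    · rw [if_pos ((hP s).mpr hs), if_pos hs, hs]; norm_num
    · rw [if_neg (fun hh => hs ((hP s).mp hh)), if_neg hs]
  rw [Finset.sum_congr rfl fun s _ => hstep s]
  rw [Finset.sum_boole]
  congr 1
  have himg : Finset.univ.filter (fun s : Finset W => s.card = 1)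
      = Finset.univ.image fun a => ({a} : Finset W) := by
    ext s
    simp [Finset.card_eq_one, eq_comm]
  rw [himg, Finset.card_image_of_injective _ (fun a b h => by simpa using h),
    Finset.card_univ]

/-- Map an unordered pair to the two-element finset. -/
def sym2ToFinset {V : Type*} [DecidableEq V] : Sym2 V → Finset V :=
  Sym2.lift ⟨fun a b => {a, b}, fun a b => Finset.pair_comm a b⟩

@[simp] lemma sym2ToFinset_mk {V : Type*} [DecidableEq V] (a b : V) :
    sym2ToFinset s(a, b) = {a, b} := rfl

/-- For a triangle-free finite simple graph `G` (whose flag complex has as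
faces exactly the vertices and edges, i.e. the nonempty cliques),
`Σ_{x ∈ V(G_1)} χ(S(x)) = 4 v_1(G)` where `v_1(G)` is the number of edges of `G` and
`G_1` is the Barycentric refinement. -/
theorem stmt8 {V : Type*} [Fintype V] [DecidableEq V] (G : SimpleGraph V)
    (htf : G.CliqueFree 3)
    (faces : Finset (Finset V))
    (hfaces : faces = Finset.univ.filter fun s : Finset V =>
        s.Nonempty ∧ G.IsClique (s : Set V))
    (G1 : SimpleGraph {x // x ∈ faces})
    (hG1 : ∀ x y : {x // x ∈ faces}, G1.Adj x y ↔ x.1 ⊂ y.1 ∨ y.1 ⊂ x.1) :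
    ∑ x : {x // x ∈ faces}, eulerChar (G1.induce (G1.neighborSet x)) =
      4 * (G.edgeFinset.card : ℤ) := by
  have hmem : ∀ s : Finset V, s ∈ faces ↔ s.Nonempty ∧ G.IsClique (s : Set V) := by
    intro s; rw [hfaces]; simp
  have hcard : ∀ s ∈ faces, s.card = 1 ∨ s.card = 2 := by
    intro s hs
    obtain ⟨hne, hcl⟩ := (hmem s).mp hs
    by_contra hc
    push_neg at hc
    have h3 : 3 ≤ s.card := by
      have := hne.card_pos; omega
    obtain ⟨t, hts, htc⟩ := Finset.exists_subset_card_eq h3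
    exact htf t ⟨hcl.subset (by exact_mod_cast hts), htc⟩
  have hsingle : ∀ v : V, ({v} : Finset V) ∈ faces := fun v =>
    (hmem _).mpr ⟨Finset.singleton_nonempty v, by simp⟩
  have hssub : ∀ a b : Finset V, a ∈ faces → b ∈ faces → a ⊂ b →
      a.card = 1 ∧ b.card = 2 := by
    intro a b ha hb hab
    have h1 := Finset.card_lt_card hab
    have h2 := hcard a ha
    have h3 := hcard b hb
    omega
  -- Step 1: each sphere is edgeless, so its Euler characteristic is its vertex count.
  have hchar : ∀ x : {x // x ∈ faces},
      eulerChar (G1.induce (G1.neighborSet x)) = ((G1.neighborFinset x).card : ℤ) := by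
    intro x
    rw [eulerChar_edgeless]
    · rw [SimpleGraph.neighborFinset, Set.toFinset_card]
    · rintro ⟨y, hy⟩ ⟨z, hz⟩ hadj
      have hyz : G1.Adj y z := hadj
      rw [SimpleGraph.mem_neighborSet] at hy hz
      have h1 := (hG1 x y).mp hy
      have h2 := (hG1 x z).mp hz
      have h3 := (hG1 y z).mp hyz
      have hx := x.2
      have hy' := y.2
      have hz' := z.2
      rcases h1 with h1 | h1 <;> rcases h2 with h2 | h2 <;> rcases h3 with h3 | h3 <;>
        [skip; skip; skip; skip; skip; skip; skip; skip] <;>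
        · have c1 := hssub _ _ (by assumption) (by assumption) h1
          have c2 := hssub _ _ (by assumption) (by assumption) h2
          have c3 := hssub _ _ (by assumption) (by assumption) h3
          omega
  rw [Finset.sum_congr rfl fun x _ => hchar x]
  -- Step 2: degree computations.
  have hdeg1 : ∀ v : V, (G1.neighborFinset ⟨{v}, hsingle v⟩).card = G.degree v := by
    intro v
    rw [SimpleGraph.degree]
    symm
    apply Finset.card_bij (fun w hw => (⟨{v, w}, (hmem _).mpr
      ⟨Finset.insert_nonempty _ _, by
        simp only [Finset.coe_insert, Finset.coe_singleton]
        exact SimpleGraph.isClique_pair.mpr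
          (fun _ => (by simpa using hw : G.Adj v w))⟩⟩ : {x // x ∈ faces}))
    · intro w hw
      have hadj : G.Adj v w := (by simpa using hw : G.Adj v w)
      rw [SimpleGraph.mem_neighborFinset, hG1]
      left
      constructor
      · simp
      · intro hsub
        have : w ∈ ({v} : Finset V) := hsub (by simp)
        simp at this
        exact hadj.ne' this
    · intro w hw w' hw' heq
      have hadj : G.Adj v w := (by simpa using hw : G.Adj v w)
      have heq' : ({v, w} : Finset V) = {v, w'} := by
        simpa [Subtype.mk.injEq] using heq
      have : w ∈ ({v, w'} : Finset V) := by rw [← heq']; simp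
      simp only [Finset.mem_insert, Finset.mem_singleton] at this
      rcases this with h | h
      · exact absurd h hadj.ne'
      · exact h
    · intro y hy
      rw [SimpleGraph.mem_neighborFinset] at hy
      rcases (hG1 _ _).mp hy with h | h
      · have hc := hssub _ _ (hsingle v) y.2 h
        obtain ⟨a, b, hab, hy2⟩ := Finset.card_eq_two.mp hc.2
        have hva : v ∈ y.1 := h.1 (by simp)
        have hcl : G.IsClique (y.1 : Set V) := ((hmem _).mp y.2).2
        have hadj : G.Adj a b := by
          apply hcl <;> simp [hy2, hab]
        rw [hy2] at hva
        simp only [Finset.mem_insert, Finset.mem_singleton] at hva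
        rcases hva with rfl | rfl
        · refine ⟨b, by simpa using hadj, Subtype.ext ?_⟩
          show ({v, b} : Finset V) = y.1
          rw [hy2]
        · refine ⟨a, by simpa using hadj.symm, Subtype.ext ?_⟩
          show ({v, a} : Finset V) = y.1
          rw [hy2, Finset.pair_comm]
      · exact absurd (hssub _ _ y.2 (hsingle v) h).2 (by simp)
  have hdeg2 : ∀ x : {x // x ∈ faces}, x.1.card = 2 → (G1.neighborFinset x).card = 2 := by
    intro x hx
    obtain ⟨a, b, hab, hx2⟩ := Finset.card_eq_two.mp hx
    have hset : G1.neighborFinset x =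
        {⟨{a}, hsingle a⟩, ⟨{b}, hsingle b⟩} := by
      ext y
      rw [SimpleGraph.mem_neighborFinset, hG1]
      constructor
      · rintro (h | h)
        · exact absurd (hssub _ _ x.2 y.2 h).1 (by omega)
        · have hc := hssub _ _ y.2 x.2 h
          obtain ⟨c, hy1⟩ := Finset.card_eq_one.mp hc.1
          have : c ∈ x.1 := h.1 (by simp [hy1])
          rw [hx2] at this
          simp only [Finset.mem_insert, Finset.mem_singleton] at this
          rcases this with rfl | rfl
          · exact Finset.mem_insert.mpr (Or.inl (Subtype.ext hy1))
          · exact Finset.mem_insert.mpr (Or.inr (Finset.mem_singleton.mpr (Subtype.ext hy1)))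
      · intro hmem'
        right
        simp only [Finset.mem_insert, Finset.mem_singleton] at hmem'
        rcases hmem' with rfl | rfl
        · simp only [hx2]
          constructor
          · simp
          · intro hsub
            have : b ∈ ({a} : Finset V) := hsub (by simp)
            simp at this
            exact hab this.symm
        · simp only [hx2]
          constructor
          · simp
          · intro hsub
            have : a ∈ ({b} : Finset V) := hsub (by simp)
            simp at this
            exact hab this
    rw [hset, Finset.card_insert_of_notMem, Finset.card_singleton]
    simp only [Finset.mem_singleton, Subtype.mk.injEq]
    intro h
    exact hab (by simpa using congrArg (a ∈ ·) h)
  -- Count the two-element faces: they biject with the edges of G.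
  have hcount : (Finset.univ.filter
      (fun x : {x // x ∈ faces} => ¬ x.1.card = 1)).card = G.edgeFinset.card := by
    symm
    have key : ∀ e ∈ G.edgeFinset, sym2ToFinset e ∈ faces ∧ (sym2ToFinset e).card = 2 := by
      intro e he
      induction e using Sym2.ind with
      | _ a b =>
        have hadj : G.Adj a b := by
          rwa [SimpleGraph.mem_edgeFinset, SimpleGraph.mem_edgeSet] at he
        refine ⟨(hmem _).mpr ⟨by simp, ?_⟩, ?_⟩
        · rw [sym2ToFinset_mk]
          exact_mod_cast SimpleGraph.isClique_pair.mpr fun _ => hadj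
        · simp [Finset.card_pair hadj.ne]
    apply Finset.card_bij (fun e he => (⟨sym2ToFinset e, (key e he).1⟩ : {x // x ∈ faces}))
    · intro e he
      simp only [Finset.mem_filter, Finset.mem_univ, true_and]
      rw [(key e he).2]; omega
    · intro e1 h1 e2 h2 heq
      simp only [Subtype.mk.injEq] at heq
      induction e1 using Sym2.ind with
      | _ a b =>
        induction e2 using Sym2.ind with
        | _ c d =>
          have hadj : G.Adj a b := by
            rwa [SimpleGraph.mem_edgeFinset, SimpleGraph.mem_edgeSet] at h1
          simp only [sym2ToFinset_mk] at heq
          have ha : a ∈ ({c, d} : Finset V) := by rw [← heq]; simp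
          have hb : b ∈ ({c, d} : Finset V) := by rw [← heq]; simp
          simp only [Finset.mem_insert, Finset.mem_singleton] at ha hb
          rw [Sym2.eq_iff]
          rcases ha with rfl | rfl
          · rcases hb with rfl | rfl
            · exact absurd rfl hadj.ne
            · exact Or.inl ⟨rfl, rfl⟩
          · rcases hb with rfl | rfl
            · exact Or.inr ⟨rfl, rfl⟩
            · exact absurd rfl hadj.ne
    · intro x hx
      simp only [Finset.mem_filter, Finset.mem_univ, true_and] at hx
      have hc2 : x.1.card = 2 := by
        rcases hcard x.1 x.2 with h | h
        · exact absurd h hx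
        · exact h
      obtain ⟨a, b, hab, hx2⟩ := Finset.card_eq_two.mp hc2
      have hcl : G.IsClique (x.1 : Set V) := ((hmem _).mp x.2).2
      have hadj : G.Adj a b := by
        apply hcl <;> simp [hx2, hab]
      refine ⟨s(a, b), ?_, ?_⟩
      · rwa [SimpleGraph.mem_edgeFinset, SimpleGraph.mem_edgeSet]
      · exact Subtype.ext (by simp [hx2])
  -- Put everything together.
  have hsplit := Finset.sum_filter_add_sum_filter_not Finset.univ
    (fun x : {x // x ∈ faces} => x.1.card = 1)
    (fun x => (G1.neighborFinset x).card)
  have hB : ∑ x ∈ Finset.univ.filter (fun x : {x // x ∈ faces} => x.1.card = 1),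
      (G1.neighborFinset x).card = ∑ v : V, G.degree v := by
    symm
    apply Finset.sum_bij (fun v _ => (⟨{v}, hsingle v⟩ : {x // x ∈ faces}))
    · intro v _
      simp
    · intro v _ w _ heq
      simpa using heq
    · intro x hx
      simp only [Finset.mem_filter, Finset.mem_univ, true_and] at hx
      obtain ⟨v, hv⟩ := Finset.card_eq_one.mp hx
      exact ⟨v, Finset.mem_univ v, (Subtype.ext hv).symm⟩
    · intro v _
      exact (hdeg1 v).symm
  have hA : ∑ x ∈ Finset.univ.filter (fun x : {x // x ∈ faces} => ¬ x.1.card = 1),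
      (G1.neighborFinset x).card = 2 * G.edgeFinset.card := by
    rw [Finset.sum_congr rfl (fun x hx => hdeg2 x (by
      simp only [Finset.mem_filter, Finset.mem_univ, true_and] at hx
      rcases hcard x.1 x.2 with h | h
      · exact absurd h hx
      · exact h))]
    rw [Finset.sum_const, hcount, smul_eq_mul, Nat.mul_comm]
  have htotal : ∑ x : {x // x ∈ faces}, (G1.neighborFinset x).card
      = 4 * G.edgeFinset.card := by
    rw [← hsplit, hB, hA, SimpleGraph.sum_degrees_eq_twice_card_edges]
    ring
  exact_mod_cast htotal
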